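/- Let L and X be as above (X the graph on vertex set L with edges when x ≤ y ≤ x + 1 or y ≤ x ≤ y + 1). Then for all x, y ∈ L, the graph distance satisfies d(x,y) = min{n + m | n, m ∈ ℕ, x ≤ y + n and y ≤ x + m}. Moreover, x ∨ y and x ∧ y each lie on a geodesic between x and y. -/

import Mathlib

open SimpleGraph

/-- The graph `X` on the vertex set `L`, with an edge between `x` and `y` iff
`x ≤ y ≤ x + 1` or `y ≤ x ≤ y + 1`, where `x + 1 = T x` for the order automorphism `T`
generating the `ℤ`-action. -/
def stepGraph {L : Type*} [Lattice L] (T : L ≃o L) : SimpleGraph L where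
  Adj x y := x ≠ y ∧ ((x ≤ y ∧ y ≤ T x) ∨ (y ≤ x ∧ x ≤ T y))
  symm := ⟨by rintro x y ⟨hne, h⟩; exact ⟨hne.symm, h.symm⟩⟩
  loopless := ⟨by rintro x ⟨hne, -⟩; exact hne rfl⟩

section aux

variable {L : Type*} [Lattice L] (T : L ≃o L)

private lemma pow_succ_apply (n : ℕ) (z : L) : (T ^ (n + 1)) z = T ((T ^ n) z) := by
  rw [pow_succ']; rfl

private lemma le_pow_self (hinc : ∀ x : L, x < T x) : ∀ (n : ℕ) (z : L), z ≤ (T ^ n) z := by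
  intro n
  induction n with
  | zero => intro z; simp
  | succ n ih =>
    intro z
    rw [pow_succ_apply]
    exact (ih z).trans (hinc _).le

private lemma pow_le_pow_of_le (n : ℕ) {a b : L} (h : a ≤ b) : (T ^ n) a ≤ (T ^ n) b :=
  (T ^ n).monotone h

/-- Lower bound: any walk of length `ℓ` yields witnesses `n + m ≤ ℓ`. -/
private lemma walk_bound (hinc : ∀ x : L, x < T x) :
    ∀ {a b : L} (p : (stepGraph T).Walk a b),
      ∃ n m : ℕ, n + m ≤ p.length ∧ a ≤ (T ^ n) b ∧ b ≤ (T ^ m) a := by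
  intro a b p
  induction p with
  | nil => exact ⟨0, 0, by simp, by simp, by simp⟩
  | @cons u v w h p ih =>
    obtain ⟨n, m, hnm, h1, h2⟩ := ih
    obtain ⟨-, hadj⟩ := h
    rcases hadj with ⟨huv, hvT⟩ | ⟨hvu, huT⟩
    · -- u ≤ v ≤ T u : use (n, m+1)
      refine ⟨n, m + 1, by show _ ≤ p.length + 1; omega, huv.trans h1, ?_⟩
      rw [pow_succ_apply]
      calc w ≤ (T ^ m) v := h2
        _ ≤ (T ^ m) (T u) := pow_le_pow_of_le T m hvT
        _ = T ((T ^ m) u) := by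
            have : (T ^ m) (T u) = (T ^ (m + 1)) u := by rw [pow_succ]; rfl
            rw [this, pow_succ_apply]
      -- done
    · -- v ≤ u ≤ T v : use (n+1, m)
      refine ⟨n + 1, m, by show _ ≤ p.length + 1; omega, ?_, h2.trans (pow_le_pow_of_le T m hvu)⟩
      rw [pow_succ_apply]
      calc u ≤ T v := huT
        _ ≤ T ((T ^ n) w) := T.monotone h1

/-- Upper bound: if `a ≤ b ≤ T^k a` then there is a walk from `a` to `b` of length `≤ k`. -/
private lemma exists_walk (hinc : ∀ x : L, x < T x) :
    ∀ (k : ℕ) (a b : L), a ≤ b → b ≤ (T ^ k) a →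
      ∃ p : (stepGraph T).Walk a b, p.length ≤ k := by
  intro k
  induction k with
  | zero =>
    intro a b hab hba
    simp only [pow_zero] at hba
    have : a = b := le_antisymm hab hba
    subst this
    exact ⟨SimpleGraph.Walk.nil, by simp⟩
  | succ k ih =>
    intro a b hab hba
    have hac : a ≤ b ⊓ (T ^ k) a := le_inf hab (le_pow_self T hinc k a)
    have hck : b ⊓ (T ^ k) a ≤ (T ^ k) a := inf_le_right
    obtain ⟨p, hp⟩ := ih a (b ⊓ (T ^ k) a) hac hck
    have hcb : b ⊓ (T ^ k) a ≤ b := inf_le_left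
    have hbc : b ≤ T (b ⊓ (T ^ k) a) := by
      rw [OrderIso.map_inf]
      refine le_inf (hinc b).le ?_
      have h' : T ((T ^ k) a) = (T ^ (k + 1)) a := (pow_succ_apply T k a).symm
      rw [h']; exact hba
    by_cases hcb' : b ⊓ (T ^ k) a = b
    · exact ⟨p.copy rfl hcb', by rw [SimpleGraph.Walk.length_copy]; omega⟩
    · have hadj : (stepGraph T).Adj (b ⊓ (T ^ k) a) b := ⟨hcb', Or.inl ⟨hcb, hbc⟩⟩
      exact ⟨p.concat hadj, by rw [SimpleGraph.Walk.length_concat]; omega⟩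

end aux

/-- Lemma 3.3. In the graph `X` on `L`, for all `x, y ∈ L` the graph
distance satisfies `d(x,y) = min {n + m | n, m ∈ ℕ, x ≤ y + n and y ≤ x + m}`; moreover,
`x ⊔ y` and `x ⊓ y` each lie on a geodesic between `x` and `y`. -/
theorem stepGraph_dist_eq {L : Type*} [Lattice L] (T : L ≃o L)
    (hjoin : ∀ S : Set L, S.Nonempty → BddAbove S → ∃ j, IsLUB S j)
    (hinc : ∀ x : L, x < T x)
    (hcof : ∀ x y : L, ∃ k : ℕ, (T ^ (k : ℤ))⁻¹ x ≤ y ∧ y ≤ (T ^ (k : ℤ)) x)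
    (x y : L) :
    (stepGraph T).dist x y =
      sInf {d : ℕ | ∃ n m : ℕ, d = n + m ∧ x ≤ (T ^ n) y ∧ y ≤ (T ^ m) x} ∧
    (stepGraph T).dist x (x ⊔ y) + (stepGraph T).dist (x ⊔ y) y = (stepGraph T).dist x y ∧
    (stepGraph T).dist x (x ⊓ y) + (stepGraph T).dist (x ⊓ y) y = (stepGraph T).dist x y := by
  set S : Set ℕ := {d : ℕ | ∃ n m : ℕ, d = n + m ∧ x ≤ (T ^ n) y ∧ y ≤ (T ^ m) x} with hS
  -- S is nonempty
  have hSne : S.Nonempty := by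
    obtain ⟨k, h1, h2⟩ := hcof x y
    rw [zpow_natCast] at h1 h2
    refine ⟨k + k, k, k, rfl, ?_, h2⟩
    calc x = (T ^ k) ((T ^ k)⁻¹ x) := by simp
      _ ≤ (T ^ k) y := (T ^ k).monotone h1
  obtain ⟨n, m, hd, hxy, hyx⟩ := Nat.sInf_mem hSne
  -- walks realizing the upper bounds through join and meet
  have hx_join : ∃ p : (stepGraph T).Walk x (x ⊔ y), p.length ≤ m :=
    exists_walk T hinc m x (x ⊔ y) le_sup_left
      (sup_le (le_pow_self T hinc m x) hyx)
  have hy_join : ∃ p : (stepGraph T).Walk y (x ⊔ y), p.length ≤ n :=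
    exists_walk T hinc n y (x ⊔ y) le_sup_right
      (sup_le hxy (le_pow_self T hinc n y))
  have hmeet_x : ∃ p : (stepGraph T).Walk (x ⊓ y) x, p.length ≤ n :=
    exists_walk T hinc n (x ⊓ y) x inf_le_left
      (by rw [OrderIso.map_inf]; exact le_inf (le_pow_self T hinc n x) hxy)
  have hmeet_y : ∃ p : (stepGraph T).Walk (x ⊓ y) y, p.length ≤ m :=
    exists_walk T hinc m (x ⊓ y) y inf_le_right
      (by rw [OrderIso.map_inf]; exact le_inf hyx (le_pow_self T hinc m y))
  obtain ⟨p1, hp1⟩ := hx_join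
  obtain ⟨p2, hp2⟩ := hy_join
  obtain ⟨q1, hq1⟩ := hmeet_x
  obtain ⟨q2, hq2⟩ := hmeet_y
  -- dist x y ≤ n + m
  have hle : (stepGraph T).dist x y ≤ n + m := by
    have := SimpleGraph.dist_le (p1.append p2.reverse)
    rw [SimpleGraph.Walk.length_append, SimpleGraph.Walk.length_reverse] at this
    omega
  -- sInf S ≤ dist x y
  have hrxy : (stepGraph T).Reachable x y := ⟨p1.append p2.reverse⟩
  obtain ⟨p, hp⟩ := hrxy.exists_walk_length_eq_dist
  have hge : sInf S ≤ (stepGraph T).dist x y := by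
    obtain ⟨n', m', hle', h1, h2⟩ := walk_bound T hinc p
    rw [hp] at hle'
    exact le_trans (Nat.sInf_le ⟨n', m', rfl, h1, h2⟩) hle'
  have hdist : (stepGraph T).dist x y = sInf S := by omega
  have hdnm : (stepGraph T).dist x y = n + m := by omega
  refine ⟨hdist, ?_, ?_⟩
  · -- join geodesic
    have h1 : (stepGraph T).dist x (x ⊔ y) ≤ m := le_trans (SimpleGraph.dist_le p1) hp1
    have h2 : (stepGraph T).dist (x ⊔ y) y ≤ n := by
      rw [SimpleGraph.dist_comm]
      exact le_trans (SimpleGraph.dist_le p2) hp2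
    -- triangle: dist x y ≤ dist x (x⊔y) + dist (x⊔y) y
    have hr1 : (stepGraph T).Reachable x (x ⊔ y) := ⟨p1⟩
    have hr2 : (stepGraph T).Reachable (x ⊔ y) y := ⟨p2.reverse⟩
    obtain ⟨w1, hw1⟩ := hr1.exists_walk_length_eq_dist
    obtain ⟨w2, hw2⟩ := hr2.exists_walk_length_eq_dist
    have htri : (stepGraph T).dist x y ≤
        (stepGraph T).dist x (x ⊔ y) + (stepGraph T).dist (x ⊔ y) y := by
      have := SimpleGraph.dist_le (w1.append w2)
      rw [SimpleGraph.Walk.length_append, hw1, hw2] at this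
      exact this
    omega
  · -- meet geodesic
    have h1 : (stepGraph T).dist x (x ⊓ y) ≤ n := by
      rw [SimpleGraph.dist_comm]
      exact le_trans (SimpleGraph.dist_le q1) hq1
    have h2 : (stepGraph T).dist (x ⊓ y) y ≤ m := le_trans (SimpleGraph.dist_le q2) hq2
    have hr1 : (stepGraph T).Reachable x (x ⊓ y) := ⟨q1.reverse⟩
    have hr2 : (stepGraph T).Reachable (x ⊓ y) y := ⟨q2⟩
    obtain ⟨w1, hw1⟩ := hr1.exists_walk_length_eq_dist
    obtain ⟨w2, hw2⟩ := hr2.exists_walk_length_eq_dist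
    have htri : (stepGraph T).dist x y ≤
        (stepGraph T).dist x (x ⊓ y) + (stepGraph T).dist (x ⊓ y) y := by
      have := SimpleGraph.dist_le (w1.append w2)
      rw [SimpleGraph.Walk.length_append, hw1, hw2] at this
      exact this
    omega
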